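/- Let f be a nonzero polynomial in n variables of total degree at most d with coefficients in a finite field F of cardinality q. Then the number of roots of f in F^n is at most d·q^(n-1). -/

import Mathlib

open scoped Classical in
private lemma sz_aux (F : Type*) [Field F] [Fintype F] :
    ∀ (n d : ℕ) (f : MvPolynomial (Fin n) F), f ≠ 0 → f.totalDegree ≤ d →
    (Finset.univ.filter fun x : Fin n → F => MvPolynomial.eval x f = 0).card
        * Fintype.card F ≤ d * (Fintype.card F) ^ n := by
  intro n
  induction n with
  | zero =>
    intro d f hf hd
    obtain ⟨c, rfl⟩ := MvPolynomial.C_surjective (Fin 0) f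
    have hc : c ≠ 0 := by simpa using hf
    have : (Finset.univ.filter fun x : Fin 0 → F => MvPolynomial.eval x (MvPolynomial.C c) = 0)
        = ∅ := by
      ext x; simp [hc]
    rw [this]; simp
  | succ n ih =>
    intro d f hf hd
    set g := MvPolynomial.finSuccEquiv F n f with hg_def
    have hg : g ≠ 0 := by
      intro h
      apply hf
      rw [hg_def] at h
      have := congrArg (MvPolynomial.finSuccEquiv F n).symm h
      simpa using this
    set k := g.natDegree with hk_def
    set c := g.leadingCoeff with hc_def
    have hc : c ≠ 0 := Polynomial.leadingCoeff_ne_zero.mpr hg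
    have hdeg : c.totalDegree + k ≤ d := by
      have := MvPolynomial.totalDegree_coeff_finSuccEquiv_add_le f k (by
        simpa [Polynomial.coeff_natDegree] using (show g.coeff k ≠ 0 from hc))
      calc c.totalDegree + k = (g.coeff k).totalDegree + k := by
            rw [hc_def, Polynomial.coeff_natDegree]
        _ ≤ f.totalDegree := this
        _ ≤ d := hd
    have hk : k ≤ d := le_trans (Nat.le_add_left _ _) hdeg
    have hcd : c.totalDegree ≤ d - k := Nat.le_sub_of_add_le hdeg
    -- fiberwise count over the tail
    set S := (Finset.univ.filter fun x : Fin (n+1) → F => MvPolynomial.eval x f = 0) with hS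
    have hfib : S.card = ∑ s : Fin n → F,
        (S.filter fun x => Fin.tail x = s).card := by
      apply Finset.card_eq_sum_card_fiberwise
      intro x _; exact Finset.mem_univ _
    have hfiber_le : ∀ s : Fin n → F, (S.filter fun x => Fin.tail x = s).card ≤
        (Finset.univ.filter fun y : F => MvPolynomial.eval (Fin.cons y s) f = 0).card := by
      intro s
      apply Finset.card_le_card_of_injOn (fun x => x 0)
      · intro x hx
        simp only [hS, Finset.mem_coe, Finset.mem_filter, Finset.mem_univ, true_and] at hx ⊢
        obtain ⟨h1, h2⟩ := hx
        rw [← h2]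
        rwa [Fin.cons_self_tail] at *
      · intro x hx y hy hxy
        simp only [hS, Finset.mem_filter, Finset.mem_coe] at hx hy
        funext i
        refine Fin.cases hxy (fun j => ?_) i
        have := congrFun (hx.2.trans hy.2.symm) j
        simpa [Fin.tail] using this
    -- bound per tail
    have hgood : ∀ s : Fin n → F, MvPolynomial.eval s c ≠ 0 →
        (Finset.univ.filter fun y : F => MvPolynomial.eval (Fin.cons y s) f = 0).card ≤ k := by
      intro s hs
      set p := Polynomial.map (MvPolynomial.eval s) g with hp_def
      have hpne : p ≠ 0 := by
        intro h
        apply hs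
        have : p.coeff k = 0 := by rw [h]; simp
        simpa [hp_def, Polynomial.coeff_map, hc_def, Polynomial.coeff_natDegree, hk_def] using this
      have heval : ∀ y : F, MvPolynomial.eval (Fin.cons y s) f = Polynomial.eval y p := by
        intro y
        exact MvPolynomial.eval_eq_eval_mv_eval' s y f
      have hsub : (Finset.univ.filter fun y : F => MvPolynomial.eval (Fin.cons y s) f = 0)
          ⊆ p.roots.toFinset := by
        intro y hy
        simp only [Finset.mem_filter, Finset.mem_univ, true_and] at hy
        rw [Multiset.mem_toFinset, Polynomial.mem_roots hpne]
        rwa [Polynomial.IsRoot, ← heval]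
      calc (Finset.univ.filter fun y : F => MvPolynomial.eval (Fin.cons y s) f = 0).card
          ≤ p.roots.toFinset.card := Finset.card_le_card hsub
        _ ≤ Multiset.card p.roots := Multiset.toFinset_card_le _
        _ ≤ p.natDegree := Polynomial.card_roots' p
        _ ≤ k := Polynomial.natDegree_map_le
    -- bad tails
    set B := (Finset.univ.filter fun s : Fin n → F => MvPolynomial.eval s c = 0) with hB
    have hBcard : B.card * Fintype.card F ≤ (d - k) * Fintype.card F ^ n := ih (d - k) c hc hcd
    have hsum : S.card ≤ B.card * Fintype.card F + k * Fintype.card F ^ n := by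
      rw [hfib]
      calc ∑ s : Fin n → F, (S.filter fun x => Fin.tail x = s).card
          ≤ ∑ s : Fin n → F, if MvPolynomial.eval s c = 0 then Fintype.card F else k := by
            apply Finset.sum_le_sum
            intro s _
            by_cases hs : MvPolynomial.eval s c = 0
            · simp only [hs, if_true]
              calc (S.filter fun x => Fin.tail x = s).card
                  ≤ (Finset.univ : Finset F).card := by
                    apply Finset.card_le_card_of_injOn (fun x => x 0)
                    · intro x _; exact Finset.mem_univ _
                    · intro x hx y hy hxy
                      simp only [Finset.mem_coe, Finset.mem_filter] at hx hy
                      funext i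
                      refine Fin.cases hxy (fun j => ?_) i
                      have := congrFun (hx.2.trans hy.2.symm) j
                      simpa [Fin.tail] using this
                _ = Fintype.card F := Finset.card_univ
            · simp only [hs, if_false]
              exact le_trans (hfiber_le s) (hgood s hs)
        _ = B.card * Fintype.card F
              + (Finset.univ.filter fun s : Fin n → F => ¬ MvPolynomial.eval s c = 0).card * k := by
            rw [Finset.sum_ite, Finset.sum_const, Finset.sum_const, smul_eq_mul, smul_eq_mul, hB]
        _ ≤ B.card * Fintype.card F + k * Fintype.card F ^ n := by
            refine Nat.add_le_add_left ?_ _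
            rw [mul_comm]
            refine Nat.mul_le_mul_left _ ?_
            calc (Finset.univ.filter fun s : Fin n → F => ¬ MvPolynomial.eval s c = 0).card
                ≤ (Finset.univ : Finset (Fin n → F)).card := Finset.card_filter_le _ _
              _ = Fintype.card F ^ n := by simp
    calc S.card * Fintype.card F
        ≤ (B.card * Fintype.card F + k * Fintype.card F ^ n) * Fintype.card F :=
          Nat.mul_le_mul_right _ hsum
      _ = B.card * Fintype.card F * Fintype.card F + k * Fintype.card F ^ (n+1) := by ring
      _ ≤ (d - k) * Fintype.card F ^ n * Fintype.card F + k * Fintype.card F ^ (n+1) := by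
          gcongr
      _ = ((d - k) + k) * Fintype.card F ^ (n+1) := by ring
      _ = d * Fintype.card F ^ (n+1) := by rw [Nat.sub_add_cancel hk]

open scoped Classical in
/-- A nonzero multivariate polynomial of total degree at most `d` over a finite field `F`
with `q` elements has at most `d * q^(n-1)` roots in `F^n`. -/
theorem schwartz_zippel_card_roots
    (F : Type*) [Field F] [Fintype F] (n d : ℕ)
    (f : MvPolynomial (Fin n) F) (hf : f ≠ 0) (hd : f.totalDegree ≤ d) :
    (Finset.univ.filter fun x : Fin n → F => MvPolynomial.eval x f = 0).card
      ≤ d * (Fintype.card F) ^ (n - 1) := by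
  cases n with
  | zero =>
    obtain ⟨c, rfl⟩ := MvPolynomial.C_surjective (Fin 0) f
    have hc : c ≠ 0 := by simpa using hf
    have : (Finset.univ.filter fun x : Fin 0 → F => MvPolynomial.eval x (MvPolynomial.C c) = 0)
        = ∅ := by ext x; simp [hc]
    rw [this]; simp
  | succ n =>
    have h := sz_aux F (n+1) d f hf hd
    have hq : 0 < Fintype.card F := Fintype.card_pos
    have : d * Fintype.card F ^ (n + 1) = d * Fintype.card F ^ n * Fintype.card F := by ring
    rw [this] at h
    simpa using Nat.le_of_mul_le_mul_right h hq
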